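/- (Non-Horn case) Let ι be a ground Equality Resolution inference with premise (C' ∨ s ≉ s' · θ) (where sθ = s'θ, σ = mgu(s,s'), and (s ≉ s')θ is maximal in (C' ∨ s ≉ s')θ) and conclusion (C'σ · θ). Then for every left-reduced ground rewrite system R contained in ≻, the conclusion is smaller than the premise in the non-Horn R-normalization closure ordering: (C'σ · θ) ≪_R (C' ∨ s ≉ s' · θ). -/

import Mathlib

/- Common infrastructure: first-order terms, clauses, ground rewrite systems,
   reduction orderings, the (Horn and non-Horn) R-normalization closure orderings,
   the Ground Closure (Horn) Superposition Calculus and its redundancy criterion,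
   and the candidate interpretation construction, following Waldmann,
   "On the (In-)Completeness of Destructive Equality Resolution in the
   Superposition Calculus". -/

set_option autoImplicit false
set_option maxHeartbeats 1000000

noncomputable section

/-- First-order terms over function symbols `F` and variables `V`. -/
inductive Trm (F V : Type) : Type
  | var : V → Trm F V
  | app : F → List (Trm F V) → Trm F V

namespace Trm
variable {F V : Type}

instance : DecidableEq (Trm F V) := Classical.decEq _

/-- Application of a substitution to a term. -/
def subst (θ : V → Trm F V) : Trm F V → Trm F V
  | var x => θ x
  | app f ts => app f (ts.attach.map fun t => subst θ t.1)
decreasing_by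
  have := List.sizeOf_lt_of_mem t.2
  simp only [Trm.app.sizeOf_spec]
  omega

/-- A term is ground if it contains no variables. -/
inductive IsGround : Trm F V → Prop
  | app {f : F} {ts : List (Trm F V)} : (∀ t ∈ ts, IsGround t) → IsGround (app f ts)

/-- The set of all subterms of a term (including the term itself). -/
def subterms : Trm F V → Finset (Trm F V)
  | var x => {var x}
  | app f ts => insert (app f ts) ((ts.attach.map fun t => subterms t.1).foldr (· ∪ ·) ∅)
decreasing_by
  have := List.sizeOf_lt_of_mem t.2
  simp only [Trm.app.sizeOf_spec]
  omega

/-- The set of proper subterms of a term (subterms at positions `> ε`). -/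
def psubterms : Trm F V → Finset (Trm F V)
  | var _ => ∅
  | app _ ts => (ts.map fun t => subterms t).foldr (· ∪ ·) ∅

end Trm

/-- Contexts: terms with exactly one hole. -/
inductive Ctx (F V : Type) : Type
  | hole : Ctx F V
  | app : F → List (Trm F V) → Ctx F V → List (Trm F V) → Ctx F V

/-- Filling the hole of a context with a term. -/
def Ctx.fill {F V : Type} : Ctx F V → Trm F V → Trm F V
  | .hole, t => t
  | .app f l c r, t => Trm.app f (l ++ c.fill t :: r)

variable {F V : Type}

/-- `RewAt R s t u root` holds iff `s` rewrites to `t` in one step using a rule of `R`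
whose left-hand side is `u`, and `root = true` iff the rewrite position is `ε`. -/
inductive RewAt (R : Set (Trm F V × Trm F V)) : Trm F V → Trm F V → Trm F V → Bool → Prop
  | root {u v : Trm F V} : (u, v) ∈ R → RewAt R u v u true
  | congr {t t' u : Trm F V} {b : Bool} {f : F} {l r : List (Trm F V)} :
      RewAt R t t' u b → RewAt R (.app f (l ++ t :: r)) (.app f (l ++ t' :: r)) u false

/-- One-step rewrite relation `s →_R t`. -/
def Step (R : Set (Trm F V × Trm F V)) (s t : Trm F V) : Prop := ∃ u b, RewAt R s t u b

/-- `t` is irreducible w.r.t. `R`. -/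
def Irred (R : Set (Trm F V × Trm F V)) (t : Trm F V) : Prop := ∀ t', ¬ Step R t t'

/-- `R` is left-reduced: the left-hand side of each rule is irreducible by the other rules. -/
def LeftReduced (R : Set (Trm F V × Trm F V)) : Prop := ∀ p ∈ R, Irred (R \ {p}) p.1

/-- A reduction ordering that is total on ground terms. -/
structure ReductionOrdering (F V : Type) where
  gt : Trm F V → Trm F V → Prop
  trans : ∀ {a b c : Trm F V}, gt a b → gt b c → gt a c
  wf : WellFounded fun a b : Trm F V => gt b a
  compat_ctx : ∀ {s t : Trm F V} (f : F) (l r : List (Trm F V)),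
      gt s t → gt (.app f (l ++ s :: r)) (.app f (l ++ t :: r))
  compat_subst : ∀ {s t : Trm F V} (θ : V → Trm F V), gt s t → gt (s.subst θ) (t.subst θ)
  total_ground : ∀ {s t : Trm F V}, s.IsGround → t.IsGround → s ≠ t → gt s t ∨ gt t s

/-- A left-reduced ground rewrite system contained in the reduction ordering `O`. -/
def GoodRS (O : ReductionOrdering F V) (R : Set (Trm F V × Trm F V)) : Prop :=
  LeftReduced R ∧ ∀ p ∈ R, p.1.IsGround ∧ p.2.IsGround ∧ O.gt p.1 p.2

/-- Reflexive-transitive rewriting to an `R`-normal form. -/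
def ReachNF (R : Set (Trm F V × Trm F V)) (t t' : Trm F V) : Prop :=
  Relation.ReflTransGen (Step R) t t' ∧ Irred R t'

open Classical in
/-- The `R`-normal form `t↓_R` of `t` (via choice; unique for terminating confluent `R`). -/
def nf (R : Set (Trm F V × Trm F V)) (t : Trm F V) : Trm F V :=
  if h : ∃ t', ReachNF R t t' then h.choose else t

/-- The graph of the labeled `R`-redex multiset function `rm_R(t,m)` of Definition 1:
`RM R t m S` holds iff `S` is a possible result of collecting the labeled redexes and
recursing along some `R`-normalization of `t`. -/
inductive RM (R : Set (Trm F V × Trm F V)) : Trm F V → ℕ → Multiset (Trm F V × ℕ) → Prop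
  | irred {t : Trm F V} {m : ℕ} : Irred R t → RM R t m 0
  | step_top {t t' u : Trm F V} {b : Bool} {m : ℕ} {S : Multiset (Trm F V × ℕ)} :
      RewAt R t t' u b → (b = true ∨ 0 < m) → RM R t' m S → RM R t m ((u, m) ::ₘ S)
  | step_deep {t t' u : Trm F V} {S : Multiset (Trm F V × ℕ)} :
      RewAt R t t' u false → RM R t' 0 S → RM R t 0 ((u, 1) ::ₘ S)

open Classical in
/-- The labeled `R`-redex multiset `rm_R(t,m)` (via choice; unique under the
hypotheses of Lemma 1). -/
def rm (R : Set (Trm F V × Trm F V)) (t : Trm F V) (m : ℕ) : Multiset (Trm F V × ℕ) :=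
  if h : ∃ S, RM R t m S then h.choose else 0

/-- Equational literals. -/
inductive Lit (F V : Type) : Type
  | pos : Trm F V → Trm F V → Lit F V
  | neg : Trm F V → Trm F V → Lit F V

instance : DecidableEq (Lit F V) := Classical.decEq _

def Lit.subst (θ : V → Trm F V) : Lit F V → Lit F V
  | .pos s t => .pos (s.subst θ) (t.subst θ)
  | .neg s t => .neg (s.subst θ) (t.subst θ)

def Lit.IsGround : Lit F V → Prop
  | .pos s t => s.IsGround ∧ t.IsGround
  | .neg s t => s.IsGround ∧ t.IsGround

def Lit.posQ : Lit F V → Bool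
  | .pos _ _ => true
  | .neg _ _ => false

/-- A clause is a finite multiset of literals; `⊥` is the empty clause `0`. -/
abbrev Clause (F V : Type) := Multiset (Lit F V)

def Clause.subst (θ : V → Trm F V) (C : Clause F V) : Clause F V := C.map (Lit.subst θ)

def Clause.IsGround (C : Clause F V) : Prop := ∀ L ∈ C, L.IsGround

/-- Horn clause: at most one positive literal. -/
def IsHorn (C : Clause F V) : Prop := Multiset.card (C.filter fun L => L.posQ = true) ≤ 1

/-- The (Dershowitz-Manna) multiset extension of a relation, `M` greater than `N`. -/
def MultGT {α : Type} (r : α → α → Prop) (M N : Multiset α) : Prop :=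
  ∃ X Y Z, M = Z + X ∧ N = Z + Y ∧ X ≠ 0 ∧ ∀ y ∈ Y, ∃ x ∈ X, r x y

/-- The multiset associated to a literal for the literal ordering. -/
def Lit.mset : Lit F V → Multiset (Trm F V)
  | .pos s t => {s, t}
  | .neg s t => {s, s, t, t}

/-- The literal ordering `≻_L`. -/
def litGT (O : ReductionOrdering F V) (L L' : Lit F V) : Prop := MultGT O.gt L.mset L'.mset

/-- The clause ordering `≻_C`. -/
def clauseGT (O : ReductionOrdering F V) (C D : Clause F V) : Prop := MultGT (litGT O) C D

/-- `L` is maximal w.r.t. the rest clause `D`. -/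
def MaxIn (O : ReductionOrdering F V) (L : Lit F V) (D : Clause F V) : Prop :=
  ∀ L' ∈ D, ¬ litGT O L' L

/-- `L` is strictly maximal w.r.t. the rest clause `D`. -/
def SMaxIn (O : ReductionOrdering F V) (L : Lit F V) (D : Clause F V) : Prop :=
  ∀ L' ∈ D, ¬ litGT O L' L ∧ L' ≠ L

section TermSets

def Lit.negSubs : Lit F V → Finset (Trm F V)
  | .neg s t => s.subterms ∪ t.subterms
  | .pos _ _ => ∅

def Lit.posPSubs : Lit F V → Finset (Trm F V)
  | .pos s t => s.psubterms ∪ t.psubterms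
  | .neg _ _ => ∅

def Lit.posSubs : Lit F V → Finset (Trm F V)
  | .pos s t => s.subterms ∪ t.subterms
  | .neg _ _ => ∅

def Lit.negTops : Lit F V → Finset (Trm F V)
  | .neg s t => {s, t}
  | .pos _ _ => ∅

def Lit.posTops : Lit F V → Finset (Trm F V)
  | .pos s t => {s, t}
  | .neg _ _ => ∅

def Lit.allSubs : Lit F V → Finset (Trm F V)
  | .pos s t => s.subterms ∪ t.subterms
  | .neg s t => s.subterms ∪ t.subterms

/-- `ss⁻(C)`: subterms of sides of negative literals. -/
def ssN (C : Clause F V) : Finset (Trm F V) := C.toFinset.sup Lit.negSubs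
/-- `ss⁺_{>ε}(C)`: proper subterms of sides of positive literals. -/
def ssPp (C : Clause F V) : Finset (Trm F V) := C.toFinset.sup Lit.posPSubs
/-- All subterms of sides of positive literals. -/
def ssP (C : Clause F V) : Finset (Trm F V) := C.toFinset.sup Lit.posSubs
/-- `ts⁻(C)`: sides of negative literals. -/
def tsN (C : Clause F V) : Finset (Trm F V) := C.toFinset.sup Lit.negTops
/-- `ts⁺(C)`: sides of positive literals. -/
def tsP (C : Clause F V) : Finset (Trm F V) := C.toFinset.sup Lit.posTops
/-- All subterms occurring in `C`. -/
def allSub (C : Clause F V) : Finset (Trm F V) := C.toFinset.sup Lit.allSubs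

/-- The labeled subterm set `lss(C)` of Definition 1. -/
def lss (C : Clause F V) : Finset (Trm F V × ℕ) :=
  (ssN C).image (fun t => (t, 2)) ∪ ((ssPp C \ ssN C).image fun t => (t, 1)) ∪
    ((tsP C \ (ssPp C ∪ ssN C)).image fun t => (t, 0))

/-- The labeled topterm set `lts(C)` of Definition 1. -/
def lts (C : Clause F V) : Finset (Trm F V × ℕ) :=
  (tsN C).image (fun t => (t, 2)) ∪ ((tsP C \ tsN C).image fun t => (t, 0))

end TermSets

/-- Contribution of one labeled subterm of `C` to `nm_R(C·θ)`. -/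
def nmElt (R : Set (Trm F V × Trm F V)) (θ : V → Trm F V) : Trm F V × ℕ → Multiset (Trm F V × ℕ)
  | (.var x, m) => rm R (θ x) m
  | (.app f ts, m) => rm R (.app f (ts.map fun t => nf R (t.subst θ))) m

/-- The `R`-normalization multiset `nm_R(C·θ)` of Definition 2 (Horn case). -/
def nm (R : Set (Trm F V × Trm F V)) (C : Clause F V) (θ : V → Trm F V) :
    Multiset (Trm F V × ℕ) :=
  (lss C).sum (nmElt R θ) + (lts C).sum fun p => {(nf R (p.1.subst θ), p.2)}

/-- A closure `(C·θ)`. -/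
abbrev Closure (F V : Type) := Clause F V × (V → Trm F V)

/-- The ground instance `Cθ` represented by a closure `(C·θ)`. -/
def Closure.inst (c : Closure F V) : Clause F V := Clause.subst c.2 c.1

def Closure.IsGround (c : Closure F V) : Prop := Clause.IsGround c.inst

/-- Equality of clauses up to bijective variable renaming. -/
def ClauseAlphaEq (C D : Clause F V) : Prop :=
  ∃ ρ : V ≃ V, Clause.subst (fun x => Trm.var (ρ x)) C = D

/-- Identification of closures: equal up to bijective renaming (with the same
ground instance). -/
def CloAlphaEq (c d : Closure F V) : Prop := ClauseAlphaEq c.1 d.1 ∧ c.inst = d.inst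

/-- The tie-breaking closure ordering `≻_Clo`: an arbitrary well-founded ordering on
ground closures, total on closures with the same ground instance, such that
`(C·θ₁) ≻_Clo (D·θ₂)` whenever `Cθ₁ = Dθ₂` and `D` is an instance of `C` but not
vice versa. -/
structure TieBreak (F V : Type) where
  gt : Closure F V → Closure F V → Prop
  wf : WellFounded fun a b : Closure F V => gt b a
  total : ∀ c d : Closure F V, c.inst = d.inst → CloAlphaEq c d ∨ gt c d ∨ gt d c
  inst_gt : ∀ c d : Closure F V, c.inst = d.inst →
      (∃ σ, Clause.subst σ c.1 = d.1) → (¬ ∃ σ, Clause.subst σ d.1 = c.1) → gt c d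

/-- Lexicographic combination of `≻` and `>` on labeled terms. -/
def lexGT (O : ReductionOrdering F V) (p q : Trm F V × ℕ) : Prop :=
  O.gt p.1 q.1 ∨ (p.1 = q.1 ∧ q.2 < p.2)

/-- The `R`-normalization closure ordering `≫_R` of Definition 2 (Horn case). -/
def cloGT (O : ReductionOrdering F V) (T : TieBreak F V) (R : Set (Trm F V × Trm F V))
    (c d : Closure F V) : Prop :=
  MultGT (lexGT O) (nm R c.1 c.2) (nm R d.1 d.2)
  ∨ (nm R c.1 c.2 = nm R d.1 d.2 ∧ clauseGT O c.inst d.inst)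
  ∨ (nm R c.1 c.2 = nm R d.1 d.2 ∧ c.inst = d.inst ∧ T.gt c d)

/-- Convertibility w.r.t. a set of ground equations: the congruence generated by `E`. -/
inductive Conv (E : Set (Trm F V × Trm F V)) : Trm F V → Trm F V → Prop
  | rel {s t : Trm F V} : (s, t) ∈ E → Conv E s t
  | refl (t : Trm F V) : Conv E t t
  | symm {s t : Trm F V} : Conv E s t → Conv E t s
  | trans {s t u : Trm F V} : Conv E s t → Conv E t u → Conv E s u
  | congr {t t' : Trm F V} {f : F} {l r : List (Trm F V)} :
      Conv E t t' → Conv E (.app f (l ++ t :: r)) (.app f (l ++ t' :: r))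

/-- Truth of a literal in the equality Herbrand interpretation generated by `E`. -/
def litTrue (E : Set (Trm F V × Trm F V)) : Lit F V → Prop
  | .pos s t => Conv E s t
  | .neg s t => ¬ Conv E s t

/-- Truth of a (ground) clause in the equality Herbrand interpretation generated by `E`. -/
def ModelsC (E : Set (Trm F V × Trm F V)) (D : Clause F V) : Prop := ∃ L ∈ D, litTrue E L

/-- `R ⊨ (C·θ)`. -/
def Models (E : Set (Trm F V × Trm F V)) (c : Closure F V) : Prop := ModelsC E c.inst

/-- `σ` is an idempotent most general unifier of `s` and `s'`. -/
def IsMGU (σ : V → Trm F V) (s s' : Trm F V) : Prop :=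
  s.subst σ = s'.subst σ ∧
  ∀ τ : V → Trm F V, s.subst τ = s'.subst τ → ∀ x, (σ x).subst τ = τ x

/-- Replacement of all occurrences of `u` by `v` in a term. -/
def replAll (u v : Trm F V) : Trm F V → Trm F V
  | .var x => if Trm.var x = u then v else .var x
  | .app f ts => if Trm.app f ts = u then v else .app f (ts.attach.map fun s => replAll u v s.1)
decreasing_by
  have := List.sizeOf_lt_of_mem s.2
  simp only [Trm.app.sizeOf_spec]
  omega

/-- Replacement of all occurrences of `u` by `v` in a clause. -/
def Clause.replAll (u v : Trm F V) (C : Clause F V) : Clause F V :=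
  C.map fun L => match L with
    | .pos s t => .pos (_root_.replAll u v s) (_root_.replAll u v t)
    | .neg s t => .neg (_root_.replAll u v s) (_root_.replAll u v t)

instance : DecidableEq V := Classical.decEq _

/-- Single-point substitution `{x ↦ t}`. -/
def single (x : V) (t : Trm F V) : V → Trm F V := fun y => if y = x then t else Trm.var y

/-- Ground inferences of the Ground Closure (Horn) Superposition Calculus.
`eqres` is Equality Resolution, `ps1` is Parallel Superposition I (overlap at a
non-variable position `u`), `ps2` is Parallel Superposition II (overlap at or below
a variable `x`, with `xθ = u[tθ]` for a context `u`). -/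
inductive GInf (F V : Type) : Type
  | eqres (C' : Clause F V) (s s' : Trm F V) (σ θ : V → Trm F V)
  | ps1 (D' : Clause F V) (t t' : Trm F V) (C : Clause F V) (u : Trm F V) (σ θ : V → Trm F V)
  | ps2 (D' : Clause F V) (t t' : Trm F V) (C : Clause F V) (x : V) (u : Ctx F V) (θ : V → Trm F V)

namespace GInf

/-- The conclusion of a ground inference. -/
def concl : GInf F V → Closure F V
  | .eqres C' _ _ σ θ => (Clause.subst σ C', θ)
  | .ps1 D' _ t' C u σ θ => (Clause.subst σ (D' + Clause.replAll u t' C), θ)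
  | .ps2 D' _ t' C x u θ => (D' + C, Function.update θ x (u.fill (t'.subst θ)))

/-- The right (or only) premise of a ground inference. -/
def rprem : GInf F V → Closure F V
  | .eqres C' s s' _ θ => (C' + {Lit.neg s s'}, θ)
  | .ps1 _ _ _ C _ _ θ => (C, θ)
  | .ps2 _ _ _ C _ _ θ => (C, θ)

/-- The left premise of a (Superposition) ground inference. -/
def lprem : GInf F V → Closure F V
  | .eqres C' s s' _ θ => (C' + {Lit.neg s s'}, θ)
  | .ps1 D' t t' _ _ _ θ => (D' + {Lit.pos t t'}, θ)
  | .ps2 D' t t' _ _ _ θ => (D' + {Lit.pos t t'}, θ)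

/-- The list of premises of a ground inference. -/
def prems : GInf F V → List (Closure F V)
  | .eqres C' s s' _ θ => [(C' + {Lit.neg s s'}, θ)]
  | .ps1 D' t t' C _ _ θ => [(D' + {Lit.pos t t'}, θ), (C, θ)]
  | .ps2 D' t t' C _ _ θ => [(D' + {Lit.pos t t'}, θ), (C, θ)]

/-- Is the inference a Superposition inference? -/
def IsSup : GInf F V → Prop
  | .eqres _ _ _ _ _ => False
  | .ps1 _ _ _ _ _ _ _ => True
  | .ps2 _ _ _ _ _ _ _ => True

/-- For a Superposition inference with left premise `(D' ∨ t ≈ t' · θ)`: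
the rule `tθ → t'θ` belongs to `R`. -/
def ruleIn (R : Set (Trm F V × Trm F V)) : GInf F V → Prop
  | .eqres _ _ _ _ _ => False
  | .ps1 _ t t' _ _ _ θ => (t.subst θ, t'.subst θ) ∈ R
  | .ps2 _ t t' _ _ _ θ => (t.subst θ, t'.subst θ) ∈ R

/-- Condition (iii) of Definition 5: a Superposition inference with left premise
`(D' ∨ t ≈ t' · θ)` such that `tθ ≻ t'θ` and `(tθ → t'θ) ∉ R`. -/
def ruleNotIn (O : ReductionOrdering F V) (R : Set (Trm F V × Trm F V)) : GInf F V → Prop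
  | .eqres _ _ _ _ _ => False
  | .ps1 _ t t' _ _ _ θ => O.gt (t.subst θ) (t'.subst θ) ∧ (t.subst θ, t'.subst θ) ∉ R
  | .ps2 _ t t' _ _ _ θ => O.gt (t.subst θ) (t'.subst θ) ∧ (t.subst θ, t'.subst θ) ∉ R

end GInf

/-- The common ordering side conditions of the Parallel Superposition rules, for a
left premise `D' ∨ t ≈ t'`, right premise `C`, overlapped term (or variable) `u`,
under the ground substitution `θ`. -/
def SideConds (O : ReductionOrdering F V) (D' : Clause F V) (t t' : Trm F V)
    (C : Clause F V) (u : Trm F V) (θ : V → Trm F V) : Prop :=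
  (u ∈ ssN C ∪ ssPp C →
     clauseGT O (Clause.subst θ C) (Clause.subst θ (D' + {Lit.pos t t'}))) ∧
  (∃ s s',
      (Lit.pos s s' ∈ C ∧ u ∈ s.subterms ∧ O.gt (s.subst θ) (s'.subst θ) ∧
        SMaxIn O (Lit.subst θ (Lit.pos s s')) (Clause.subst θ (C.erase (Lit.pos s s')))) ∨
      (Lit.neg s s' ∈ C ∧ u ∈ s.subterms ∧ O.gt (s.subst θ) (s'.subst θ) ∧
        MaxIn O (Lit.subst θ (Lit.neg s s')) (Clause.subst θ (C.erase (Lit.neg s s'))))) ∧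
  SMaxIn O (Lit.subst θ (Lit.pos t t')) (Clause.subst θ D') ∧
  O.gt (t.subst θ) (t'.subst θ)

/-- Validity of a ground inference: all side conditions of the corresponding rule of
the Ground Closure Horn Superposition Calculus hold. -/
def GInf.IsInf (O : ReductionOrdering F V) : GInf F V → Prop
  | .eqres C' s s' σ θ =>
      Closure.IsGround (C' + {Lit.neg s s'}, θ) ∧
      s.subst θ = s'.subst θ ∧ IsMGU σ s s' ∧
      MaxIn O (Lit.subst θ (Lit.neg s s')) (Clause.subst θ C')
  | .ps1 D' t t' C u σ θ =>
      Closure.IsGround (D' + {Lit.pos t t'}, θ) ∧ Closure.IsGround (C, θ) ∧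
      (¬ ∃ x, u = Trm.var x) ∧ t.subst θ = u.subst θ ∧ IsMGU σ t u ∧
      u ∈ allSub C ∧ SideConds O D' t t' C u θ
  | .ps2 D' t t' C x u θ =>
      Closure.IsGround (D' + {Lit.pos t t'}, θ) ∧ Closure.IsGround (C, θ) ∧
      Trm.var x ∈ allSub C ∧ θ x = u.fill (t.subst θ) ∧
      SideConds O D' t t' C (Trm.var x) θ

/-- Redundant closures (Definition 3). -/
def RedC (O : ReductionOrdering F V) (T : TieBreak F V) (N : Set (Closure F V))
    (c : Closure F V) : Prop :=
  ∀ R, GoodRS O R → Models R c ∨ ∃ d ∈ N, cloGT O T R c d ∧ ¬ Models R d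

/-- Redundant inferences (Definition 4). -/
def RedI (O : ReductionOrdering F V) (T : TieBreak F V) (N : Set (Closure F V))
    (ι : GInf F V) : Prop :=
  ∀ R, GoodRS O R →
    Models R ι.concl
    ∨ (∃ c ∈ N, cloGT O T R ι.rprem c ∧ ¬ Models R c)
    ∨ ι.ruleNotIn O R
    ∨ (ι.IsSup ∧ cloGT O T R ι.lprem ι.rprem)

section Candidate

/-- `s` is a strictly maximal term of the ground clause `D` and occurs in `D` only
(at the top) in positive literals. -/
def StrictMaxTermPos (O : ReductionOrdering F V) (D : Clause F V) (s : Trm F V) : Prop :=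
  (∀ w ∈ allSub D, w = s ∨ O.gt s w) ∧ s ∉ ssN D ∧ s ∉ ssPp D ∧ s ∈ tsP D

/-- The productivity conditions (Horn case) for the closure `(C' ∨ u ≈ u' · θ) ∈ N`
w.r.t. the partial interpretation `Rs`. -/
def ProdConds (O : ReductionOrdering F V) (N : Set (Closure F V))
    (Rs : Set (Trm F V × Trm F V)) (C' : Clause F V) (u u' : Trm F V)
    (θ : V → Trm F V) : Prop :=
  (C' + {Lit.pos u u'}, θ) ∈ N ∧
  Closure.IsGround (C' + {Lit.pos u u'}, θ) ∧
  StrictMaxTermPos O (Clause.subst θ (C' + {Lit.pos u u'})) (u.subst θ) ∧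
  Irred Rs (u.subst θ) ∧
  ¬ Models Rs (C' + {Lit.pos u u'}, θ) ∧
  O.gt (u.subst θ) (u'.subst θ)

/-- `(C' ∨ u ≈ u' · θ)` is the `≫_{Rs}`-smallest closure in `N` satisfying the
productivity conditions for the left-hand side `s`. -/
def ProducesFor (O : ReductionOrdering F V) (T : TieBreak F V) (N : Set (Closure F V))
    (Rs : Set (Trm F V × Trm F V)) (s : Trm F V) (C' : Clause F V) (u u' : Trm F V)
    (θ : V → Trm F V) : Prop :=
  u.subst θ = s ∧ ProdConds O N Rs C' u u' θ ∧
  ∀ D' v v' θ', v.subst θ' = s → ProdConds O N Rs D' v v' θ' →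
    (D' + {Lit.pos v v'}, θ') = (C' + {Lit.pos u u'}, θ) ∨
    cloGT O T Rs (D' + {Lit.pos v v'}, θ') (C' + {Lit.pos u u'}, θ)

/-- `R_s = ⋃_{t ≺ s} E_t`. -/
def Rbelow (O : ReductionOrdering F V) (E : Trm F V → Set (Trm F V × Trm F V))
    (s : Trm F V) : Set (Trm F V × Trm F V) :=
  { p | ∃ t, O.gt s t ∧ p ∈ E t }

/-- `R_* = ⋃_t E_t`. -/
def Rstar (E : Trm F V → Set (Trm F V × Trm F V)) : Set (Trm F V × Trm F V) :=
  { p | ∃ t, p ∈ E t }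

/-- `E` is the family of rule sets of the candidate interpretation constructed from `N`:
`E s = {s → u'θ}` for the `≫_{R_s}`-smallest productive closure for `s` if one
exists, and `E s = ∅` otherwise. -/
def IsCandidate (O : ReductionOrdering F V) (T : TieBreak F V) (N : Set (Closure F V))
    (E : Trm F V → Set (Trm F V × Trm F V)) : Prop :=
  ∀ s : Trm F V,
    (∃ C' u u' θ, ProducesFor O T N (Rbelow O E s) s C' u u' θ ∧
        E s = {(s, u'.subst θ)})
    ∨ ((¬ ∃ C' u u' θ, ProducesFor O T N (Rbelow O E s) s C' u u' θ) ∧ E s = ∅)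

/-- The closure `(C' ∨ u ≈ u' · θ)` produces the rule `uθ → u'θ` in the candidate
interpretation given by `E`. -/
def ProducesRule (O : ReductionOrdering F V) (T : TieBreak F V) (N : Set (Closure F V))
    (E : Trm F V → Set (Trm F V × Trm F V)) (C' : Clause F V) (u u' : Trm F V)
    (θ : V → Trm F V) : Prop :=
  ProducesFor O T N (Rbelow O E (u.subst θ)) (u.subst θ) C' u u' θ ∧
  E (u.subst θ) = {(u.subst θ, u'.subst θ)}

end Candidate

section NonHorn

/-- The graph of the (non-Horn) `R`-redex multiset function `rm_R(t)` of Definition 7. -/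
inductive RMn (R : Set (Trm F V × Trm F V)) :
    Trm F V → Multiset (Multiset (Trm F V)) → Prop
  | irred {t : Trm F V} : Irred R t → RMn R t 0
  | step {t t' u : Trm F V} {b : Bool} {S : Multiset (Multiset (Trm F V))} :
      RewAt R t t' u b → RMn R t' S → RMn R t (({u, u} : Multiset (Trm F V)) ::ₘ S)

open Classical in
/-- The (non-Horn) `R`-redex multiset `rm_R(t)` (via choice). -/
def rmN (R : Set (Trm F V × Trm F V)) (t : Trm F V) : Multiset (Multiset (Trm F V)) :=
  if h : ∃ S, RMn R t S then h.choose else 0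

/-- Contribution of one subterm of a negative literal to the non-Horn `nm_R(C·θ)`. -/
def nmNElt (R : Set (Trm F V × Trm F V)) (θ : V → Trm F V) :
    Trm F V → Multiset (Multiset (Trm F V))
  | .var x => rmN R (θ x)
  | .app f ts => rmN R (.app f (ts.map fun t => nf R (t.subst θ)))

/-- The non-Horn `R`-normalization multiset `nm_R(C·θ)` of Definition 8. -/
def nmN (R : Set (Trm F V × Trm F V)) (C : Clause F V) (θ : V → Trm F V) :
    Multiset (Multiset (Trm F V)) :=
  (ssN C).sum (nmNElt R θ) +
  (tsN C).sum (fun t => {({nf R (t.subst θ), nf R (t.subst θ)} : Multiset (Trm F V))}) +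
  (C.map fun L => match L with
     | .pos s s' => (({({s.subst θ, s'.subst θ} : Multiset (Trm F V))}) :
         Multiset (Multiset (Trm F V)))
     | .neg _ _ => 0).sum

/-- The non-Horn `R`-normalization closure ordering `≫_R` of Definition 8. -/
def cloGTN (O : ReductionOrdering F V) (T : TieBreak F V) (R : Set (Trm F V × Trm F V))
    (c d : Closure F V) : Prop :=
  MultGT (MultGT O.gt) (nmN R c.1 c.2) (nmN R d.1 d.2)
  ∨ (nmN R c.1 c.2 = nmN R d.1 d.2 ∧ clauseGT O c.inst d.inst)
  ∨ (nmN R c.1 c.2 = nmN R d.1 d.2 ∧ c.inst = d.inst ∧ T.gt c d)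

end NonHorn

section Lifting

/-- The set `G(N)` of ground closures of a set `N` of clauses. -/
def GClosures (N : Set (Clause F V)) : Set (Closure F V) :=
  { c | c.1 ∈ N ∧ c.IsGround }

/-- The ordering side conditions of the non-ground Parallel Superposition rule, for
left premise `D' ∨ t ≈ t'`, right premise `C`, overlapped non-variable subterm `u`,
and mgu `σ`. -/
def NGSideConds (O : ReductionOrdering F V) (D' : Clause F V) (t t' : Trm F V)
    (C : Clause F V) (u : Trm F V) (σ : V → Trm F V) : Prop :=
  (u ∈ ssN C ∪ ssPp C →
     ¬ (clauseGT O (Clause.subst σ (D' + {Lit.pos t t'})) (Clause.subst σ C) ∨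
        Clause.subst σ C = Clause.subst σ (D' + {Lit.pos t t'}))) ∧
  (∃ s s',
      (Lit.pos s s' ∈ C ∧ u ∈ s.subterms ∧
        ¬ (O.gt (s'.subst σ) (s.subst σ) ∨ s.subst σ = s'.subst σ) ∧
        SMaxIn O (Lit.subst σ (Lit.pos s s')) (Clause.subst σ (C.erase (Lit.pos s s')))) ∨
      (Lit.neg s s' ∈ C ∧ u ∈ s.subterms ∧
        ¬ (O.gt (s'.subst σ) (s.subst σ) ∨ s.subst σ = s'.subst σ) ∧
        MaxIn O (Lit.subst σ (Lit.neg s s')) (Clause.subst σ (C.erase (Lit.neg s s'))))) ∧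
  SMaxIn O (Lit.subst σ (Lit.pos t t')) (Clause.subst σ D') ∧
  ¬ (O.gt (t'.subst σ) (t.subst σ) ∨ t.subst σ = t'.subst σ)

/-- The ground inference `ι` is a ground instance of an inference of the
(non-ground) Horn Superposition Calculus with Parallel Superposition whose
premises are exactly the clauses occurring in the premise closures of `ι`. -/
def IsGroundInstOfNG (O : ReductionOrdering F V) : GInf F V → Prop
  | .eqres C' s s' σ _ =>
      IsMGU σ s s' ∧
      MaxIn O (Lit.subst σ (Lit.neg s s')) (Clause.subst σ C')
  | .ps1 D' t t' C u σ _ =>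
      (¬ ∃ x, u = Trm.var x) ∧ IsMGU σ t u ∧ u ∈ allSub C ∧
      NGSideConds O D' t t' C u σ
  | .ps2 _ _ _ _ _ _ _ => False

/-- Non-ground inferences of the Horn Superposition Calculus with Parallel
Superposition. -/
inductive NGInf (F V : Type) : Type
  | eqres (C' : Clause F V) (s s' : Trm F V) (σ : V → Trm F V)
  | psup (D' : Clause F V) (t t' : Trm F V) (C : Clause F V) (u : Trm F V) (σ : V → Trm F V)

namespace NGInf

/-- Side conditions of the non-ground rules. -/
def IsInf (O : ReductionOrdering F V) : NGInf F V → Prop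
  | .eqres C' s s' σ =>
      IsMGU σ s s' ∧ MaxIn O (Lit.subst σ (Lit.neg s s')) (Clause.subst σ C')
  | .psup D' t t' C u σ =>
      (¬ ∃ x, u = Trm.var x) ∧ IsMGU σ t u ∧ u ∈ allSub C ∧
      NGSideConds O D' t t' C u σ

/-- Premises of a non-ground inference. -/
def prems : NGInf F V → List (Clause F V)
  | .eqres C' s s' _ => [C' + {Lit.neg s s'}]
  | .psup D' t t' C _ _ => [D' + {Lit.pos t t'}, C]

/-- Conclusion of a non-ground inference. -/
def concl : NGInf F V → Clause F V
  | .eqres C' _ _ σ => Clause.subst σ C'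
  | .psup D' _ t' C u σ => Clause.subst σ (D' + Clause.replAll u t' C)

/-- The set `G(ι)` of ground instances of a non-ground inference. -/
def GInsts (O : ReductionOrdering F V) : NGInf F V → Set (GInf F V)
  | .eqres C' s s' σ => { g | ∃ θ, g = GInf.eqres C' s s' σ θ ∧ g.IsInf O }
  | .psup D' t t' C u σ => { g | ∃ θ, g = GInf.ps1 D' t t' C u σ θ ∧ g.IsInf O }

end NGInf

end Lifting

section Aux
variable {F V : Type}

namespace Trm

theorem subst_var (θ : V → Trm F V) (x : V) : (Trm.var x : Trm F V).subst θ = θ x := by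
  rw [Trm.subst]

theorem subst_app (θ : V → Trm F V) (f : F) (ts : List (Trm F V)) :
    (Trm.app f ts).subst θ = Trm.app f (ts.map (Trm.subst θ)) := by
  rw [Trm.subst]
  simp [List.attach_map_subtype_val]

theorem subterms_var (x : V) : (Trm.var x : Trm F V).subterms = {Trm.var x} := by
  rw [Trm.subterms]

theorem subterms_app (f : F) (ts : List (Trm F V)) :
    (Trm.app f ts).subterms =
      insert (Trm.app f ts) ((ts.map Trm.subterms).foldr (· ∪ ·) ∅) := by
  rw [Trm.subterms]
  congr 1
  simp [List.attach_map_subtype_val]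

theorem mem_foldr_union {α : Type} [DecidableEq α] {L : List (Finset α)} {a : α} :
    a ∈ L.foldr (· ∪ ·) ∅ ↔ ∃ s ∈ L, a ∈ s := by
  induction L with
  | nil => simp
  | cons b L ih => simp [ih]

theorem mem_subterms_app {f : F} {ts : List (Trm F V)} {v : Trm F V} :
    v ∈ (Trm.app f ts).subterms ↔ v = Trm.app f ts ∨ ∃ t ∈ ts, v ∈ t.subterms := by
  rw [subterms_app]
  simp [mem_foldr_union]

theorem self_mem_subterms : ∀ t : Trm F V, t ∈ t.subterms
  | .var x => by simp [subterms_var]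
  | .app f ts => by rw [subterms_app]; exact Finset.mem_insert_self _ _

theorem subterms_trans : ∀ {t w : Trm F V}, w ∈ t.subterms → w.subterms ⊆ t.subterms
  | .var x, w, hw => by
      simp [subterms_var] at hw
      subst hw; simp [subterms_var]
  | .app f ts, w, hw => by
      rcases mem_subterms_app.1 hw with h | ⟨t, ht, hwt⟩
      · subst h; exact fun _ h => h
      · intro v hv
        exact mem_subterms_app.2 (Or.inr ⟨t, ht, subterms_trans hwt hv⟩)
termination_by t w h => sizeOf t
decreasing_by
  have := List.sizeOf_lt_of_mem ht
  simp only [Trm.app.sizeOf_spec]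
  omega

theorem subst_subst (σ θ : V → Trm F V) :
    ∀ t : Trm F V, (t.subst σ).subst θ = t.subst (fun x => (σ x).subst θ)
  | .var x => by rw [subst_var, subst_var]
  | .app f ts => by
      rw [subst_app, subst_app, subst_app]
      simp only [List.map_map]
      congr 1
      apply List.map_congr_left
      intro t ht
      exact subst_subst σ θ t
termination_by t => sizeOf t
decreasing_by
  have := List.sizeOf_lt_of_mem ht
  simp only [Trm.app.sizeOf_spec]; omega

/-- Classification of subterms of `t.subst σ`. -/
theorem subterms_subst_cases {σ : V → Trm F V} :
    ∀ {t v : Trm F V}, v ∈ (t.subst σ).subterms →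
      (∃ w ∈ t.subterms, (¬ ∃ x, w = Trm.var x) ∧ v = w.subst σ) ∨
      (∃ x, Trm.var x ∈ t.subterms ∧ v ∈ (σ x).subterms)
  | .var x, v, hv => by
      rw [subst_var] at hv
      exact Or.inr ⟨x, by simp [subterms_var], hv⟩
  | .app f ts, v, hv => by
      rw [subst_app] at hv
      rcases mem_subterms_app.1 hv with h | ⟨t', ht', hvt⟩
      · refine Or.inl ⟨.app f ts, self_mem_subterms _, by simp, ?_⟩
        rw [subst_app]; exact h
      · rcases List.mem_map.1 ht' with ⟨t, ht, rfl⟩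
        rcases subterms_subst_cases hvt with ⟨w, hw, hnv, rfl⟩ | ⟨x, hx, hvx⟩
        · exact Or.inl ⟨w, mem_subterms_app.2 (Or.inr ⟨t, ht, hw⟩), hnv, rfl⟩
        · exact Or.inr ⟨x, mem_subterms_app.2 (Or.inr ⟨t, ht, hx⟩), hvx⟩
termination_by t v h => sizeOf t
decreasing_by
  have := List.sizeOf_lt_of_mem ht
  simp only [Trm.app.sizeOf_spec]; omega

end Trm

end Aux
section Rew
variable {F V : Type} {O : ReductionOrdering F V} {R : Set (Trm F V × Trm F V)}

theorem RewAt.mono {R' : Set (Trm F V × Trm F V)} (hsub : R ⊆ R') :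
    ∀ {s t u : Trm F V} {b : Bool}, RewAt R s t u b → RewAt R' s t u b := by
  intro s t u b h
  induction h with
  | root h => exact .root (hsub h)
  | congr _ ih => exact .congr ih

theorem RewAt.rule : ∀ {s t u : Trm F V} {b : Bool}, RewAt R s t u b →
    ∃ v, (u, v) ∈ R ∧ RewAt {(u, v)} s t u b := by
  intro s t u b h
  induction h with
  | root h => exact ⟨_, h, .root rfl⟩
  | congr _ ih => exact ⟨ih.choose, ih.choose_spec.1, .congr ih.choose_spec.2⟩

theorem RewAt.size : ∀ {s t u : Trm F V} {b : Bool}, RewAt R s t u b →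
    sizeOf u ≤ sizeOf s := by
  intro s t u b h
  induction h with
  | root h => exact le_refl _
  | @congr t t' u b f l r h ih =>
      have h1 : sizeOf t < sizeOf (Trm.app f (l ++ t :: r)) := by
        have := List.sizeOf_lt_of_mem (show t ∈ l ++ t :: r by simp)
        simp only [Trm.app.sizeOf_spec]; omega
      omega

theorem step_gt (hR : GoodRS O R) {s t : Trm F V} (h : Step R s t) : O.gt s t := by
  obtain ⟨u, b, h⟩ := h
  induction h with
  | root h => exact (hR.2 _ h).2.2
  | congr _ ih => exact O.compat_ctx _ _ _ ih

theorem RewAt.cases' {s t u : Trm F V} {b : Bool} (h : RewAt R s t u b) :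
    (s = u ∧ (u, t) ∈ R) ∨
    (∃ f l r a a' b', s = Trm.app f (l ++ a :: r) ∧ t = Trm.app f (l ++ a' :: r) ∧
      RewAt R a a' u b') := by
  cases h with
  | root h => exact Or.inl ⟨rfl, h⟩
  | @congr a a' u b f l r h => exact Or.inr ⟨f, l, r, a, a', b, rfl, rfl, h⟩

theorem append_cons_cases {α : Type} :
    ∀ {l l' r r' : List α} {a a' : α}, l ++ a :: r = l' ++ a' :: r' →
      (l = l' ∧ a = a' ∧ r = r') ∨
      (∃ m, l' = l ++ a :: m ∧ r = m ++ a' :: r') ∨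
      (∃ m, l = l' ++ a' :: m ∧ r' = m ++ a :: r) := by
  intro l
  induction l with
  | nil =>
      intro l' r r' a a' h
      cases l' with
      | nil => simp_all
      | cons b l'' =>
          simp only [List.nil_append, List.cons_append, List.cons.injEq] at h
          exact Or.inr (Or.inl ⟨l'', by simp [h.1, h.2], by simp [h.2]⟩)
  | cons b l ih =>
      intro l' r r' a a' h
      cases l' with
      | nil =>
          simp only [List.nil_append, List.cons_append, List.cons.injEq] at h
          exact Or.inr (Or.inr ⟨l, by simp [h.1, h.2], by simp [h.2]⟩)
      | cons b' l'' =>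
          simp only [List.cons_append, List.cons.injEq] at h
          rcases ih h.2 with ⟨rfl, rfl, rfl⟩ | ⟨m, hm1, hm2⟩ | ⟨m, hm1, hm2⟩
          · exact Or.inl ⟨by rw [h.1], rfl, rfl⟩
          · exact Or.inr (Or.inl ⟨m, by rw [h.1, hm1, List.cons_append], hm2⟩)
          · exact Or.inr (Or.inr ⟨m, by rw [h.1, hm1, List.cons_append], hm2⟩)

theorem root_no_inner (hR : GoodRS O R) {v a a' w : Trm F V} {b : Bool}
    {f : F} {l r : List (Trm F V)}
    (hu : (Trm.app f (l ++ a :: r), v) ∈ R)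
    (ha : RewAt R a a' w b) : False := by
  obtain ⟨v', hv', ha'⟩ := ha.rule
  by_cases hp : (w, v') = (Trm.app f (l ++ a :: r), v)
  · have hw : w = Trm.app f (l ++ a :: r) := congrArg Prod.fst hp
    have h1 : sizeOf w ≤ sizeOf a := ha.size
    have h2 : sizeOf a < sizeOf (Trm.app f (l ++ a :: r)) := by
      have := List.sizeOf_lt_of_mem (show a ∈ l ++ a :: r by simp)
      simp only [Trm.app.sizeOf_spec]; omega
    rw [hw] at h1
    omega
  · have hmem : ({(w, v')} : Set (Trm F V × Trm F V)) ⊆ R \ {(Trm.app f (l ++ a :: r), v)} := by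
      intro p hp'
      rcases hp' with rfl
      exact ⟨hv', by simp [hp]⟩
    exact hR.1 _ hu (Trm.app f (l ++ a' :: r)) ⟨w, false, RewAt.congr (ha'.mono hmem)⟩

/-- Key commutation lemma for left-reduced rewrite systems. -/
theorem diamond_aux (hR : GoodRS O R) :
    ∀ (n : ℕ) (t : Trm F V), sizeOf t ≤ n → ∀ (t1 t2 u u' : Trm F V) (b1 b2 : Bool),
      RewAt R t t1 u b1 → RewAt R t t2 u' b2 →
      (t1 = t2 ∧ u = u') ∨
      ∃ t3 c1 c2, RewAt R t1 t3 u' c1 ∧ RewAt R t2 t3 u c2 := by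
  intro n
  induction n with
  | zero =>
      intro t ht
      exfalso
      cases t with
      | var x => simp only [Trm.var.sizeOf_spec] at ht; omega
      | app f ts => simp only [Trm.app.sizeOf_spec] at ht; omega
  | succ n ih =>
      intro t ht t1 t2 u u' b1 b2 h1 h2
      rcases h1.cases' with ⟨rfl, hu1⟩ | ⟨f, l, r, a, a1, b1', rfl, rfl, ha1⟩
      · rcases h2.cases' with ⟨heq, hu2⟩ | ⟨f, l, r, a, a2, b2', htop, rfl, ha2⟩
        · subst heq
          by_cases hvv : t1 = t2
          · exact Or.inl ⟨hvv, rfl⟩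
          · exfalso
            have hmem : (t, t2) ∈ R \ {(t, t1)} := by
              simp only [Set.mem_diff, Set.mem_singleton_iff]
              exact ⟨hu2, fun hmem => hvv (congrArg Prod.snd hmem).symm⟩
            exact hR.1 _ hu1 _ ⟨t, true, .root hmem⟩
        · exact (root_no_inner hR (htop ▸ hu1) ha2).elim
      · rcases h2.cases' with ⟨heq, hu2⟩ | ⟨f', l', r', a', a2, b2', htop, ht2, ha2⟩
        · exact (root_no_inner hR (heq ▸ hu2) ha1).elim
        · have hf : f = f' := by injection htop with hf _
          subst hf
          have hl : l ++ a :: r = l' ++ a' :: r' := by injection htop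
          have hsz : sizeOf a ≤ n := by
            have := List.sizeOf_lt_of_mem (show a ∈ l ++ a :: r by simp)
            simp only [Trm.app.sizeOf_spec] at ht
            omega
          rcases append_cons_cases hl with ⟨rfl, rfl, rfl⟩ | ⟨m, rfl, rfl⟩ | ⟨m, rfl, rfl⟩
          · rcases ih a hsz a1 a2 u u' b1' b2' ha1 ha2 with ⟨rfl, huu⟩ | ⟨a3, c1, c2, hc1, hc2⟩
            · subst ht2; exact Or.inl ⟨rfl, huu⟩
            · subst ht2
              exact Or.inr ⟨Trm.app f (l ++ a3 :: r), false, false, .congr hc1, .congr hc2⟩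
          · subst ht2
            refine Or.inr ⟨Trm.app f (l ++ a1 :: (m ++ a2 :: r')), false, false, ?_, ?_⟩
            · have e1 : l ++ a1 :: (m ++ a' :: r') = (l ++ a1 :: m) ++ a' :: r' := by simp
              have e2 : l ++ a1 :: (m ++ a2 :: r') = (l ++ a1 :: m) ++ a2 :: r' := by simp
              rw [e1, e2]
              exact .congr ha2
            · have e3 : (l ++ a :: m) ++ a2 :: r' = l ++ a :: (m ++ a2 :: r') := by simp
              rw [e3]
              exact .congr ha1
          · subst ht2
            refine Or.inr ⟨Trm.app f (l' ++ a2 :: (m ++ a1 :: r)), false, false, ?_, ?_⟩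
            · have e1 : (l' ++ a' :: m) ++ a1 :: r = l' ++ a' :: (m ++ a1 :: r) := by simp
              rw [e1]
              exact .congr ha2
            · have e2 : l' ++ a2 :: (m ++ a :: r) = (l' ++ a2 :: m) ++ a :: r := by simp
              have e3 : l' ++ a2 :: (m ++ a1 :: r) = (l' ++ a2 :: m) ++ a1 :: r := by simp
              rw [e2, e3]
              exact .congr ha1

theorem diamond (hR : GoodRS O R) {t t1 t2 u u' : Trm F V} {b1 b2 : Bool}
    (h1 : RewAt R t t1 u b1) (h2 : RewAt R t t2 u' b2) :
    (t1 = t2 ∧ u = u') ∨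
    ∃ t3 c1 c2, RewAt R t1 t3 u' c1 ∧ RewAt R t2 t3 u c2 :=
  diamond_aux hR (sizeOf t) t (le_refl _) t1 t2 u u' b1 b2 h1 h2

end Rew
section Norm
variable {F V : Type} {O : ReductionOrdering F V} {R : Set (Trm F V × Trm F V)}

theorem reachNF_exists (hR : GoodRS O R) : ∀ t : Trm F V, ∃ t', ReachNF R t t' := by
  intro t
  induction t using WellFounded.induction O.wf with
  | _ t ih =>
      by_cases hirr : Irred R t
      · exact ⟨t, Relation.ReflTransGen.refl, hirr⟩
      · obtain ⟨t1, h1⟩ := not_forall.1 hirr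
        have h1' : Step R t t1 := not_not.1 h1
        obtain ⟨t', ht1, ht2⟩ := ih t1 (step_gt hR h1')
        exact ⟨t', Relation.ReflTransGen.head h1' ht1, ht2⟩

theorem RMn_exists (hR : GoodRS O R) : ∀ t : Trm F V, ∃ S, RMn R t S := by
  intro t
  induction t using WellFounded.induction O.wf with
  | _ t ih =>
      by_cases hirr : Irred R t
      · exact ⟨0, .irred hirr⟩
      · obtain ⟨t1, h1⟩ := not_forall.1 hirr
        have h1' : Step R t t1 := not_not.1 h1
        obtain ⟨S, hS⟩ := ih t1 (step_gt hR h1')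
        obtain ⟨u, b, hu⟩ := h1'
        exact ⟨_, .step hu hS⟩

theorem step_diamond (hR : GoodRS O R) {t t1 t2 : Trm F V}
    (h1 : Step R t t1) (h2 : Step R t t2) :
    ∃ d, Relation.ReflGen (Step R) t1 d ∧ Relation.ReflTransGen (Step R) t2 d := by
  obtain ⟨u, b1, h1⟩ := h1
  obtain ⟨u', b2, h2⟩ := h2
  rcases diamond hR h1 h2 with ⟨rfl, -⟩ | ⟨t3, c1, c2, hc1, hc2⟩
  · exact ⟨t1, .refl, .refl⟩
  · exact ⟨t3, .single ⟨u', c1, hc1⟩, .single ⟨u, c2, hc2⟩⟩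

theorem irred_rtg {t t' : Trm F V} (h : Irred R t)
    (hr : Relation.ReflTransGen (Step R) t t') : t = t' := by
  rcases hr.cases_head with h' | ⟨c, hc, -⟩
  · exact h'
  · exact absurd hc (h c)

theorem reachNF_unique (hR : GoodRS O R) {t a b : Trm F V}
    (ha : ReachNF R t a) (hb : ReachNF R t b) : a = b := by
  obtain ⟨d, hd1, hd2⟩ := Relation.church_rosser
    (fun x y z hy hz => step_diamond hR hy hz) ha.1 hb.1
  have h1 := irred_rtg ha.2 hd1
  have h2 := irred_rtg hb.2 hd2
  rw [h1, h2]

theorem nf_eq (hR : GoodRS O R) {t t' : Trm F V} (h : ReachNF R t t') : nf R t = t' := by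
  rw [nf, dif_pos ⟨t', h⟩]
  exact reachNF_unique hR (⟨t', h⟩ : ∃ x, ReachNF R t x).choose_spec h

theorem nf_reach (hR : GoodRS O R) (t : Trm F V) : ReachNF R t (nf R t) := by
  obtain ⟨t', h⟩ := reachNF_exists hR t
  rw [nf_eq hR h]
  exact h

theorem RMn_unique (hR : GoodRS O R) :
    ∀ (t : Trm F V) {S1 S2}, RMn R t S1 → RMn R t S2 → S1 = S2 := by
  intro t
  induction t using WellFounded.induction O.wf with
  | _ t ih =>
      intro S1 S2 h1 h2
      cases h1 with
      | irred hi =>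
          cases h2 with
          | irred _ => rfl
          | step hr _ => exact absurd ⟨_, _, hr⟩ (hi _)
      | @step _ t1 u b1 S1' hr1 hS1 =>
          cases h2 with
          | irred hi => exact absurd ⟨_, _, hr1⟩ (hi _)
          | @step _ t2 u' b2 S2' hr2 hS2 =>
              have hgt1 : O.gt t t1 := step_gt hR ⟨_, _, hr1⟩
              have hgt2 : O.gt t t2 := step_gt hR ⟨_, _, hr2⟩
              rcases diamond hR hr1 hr2 with ⟨rfl, rfl⟩ | ⟨t3, c1, c2, hc1, hc2⟩
              · rw [ih t1 hgt1 hS1 hS2]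
              · obtain ⟨S3, hS3⟩ := RMn_exists hR t3
                have e1 : S1' = ({u', u'} : Multiset (Trm F V)) ::ₘ S3 :=
                  ih t1 hgt1 hS1 (.step hc1 hS3)
                have e2 : S2' = ({u, u} : Multiset (Trm F V)) ::ₘ S3 :=
                  ih t2 hgt2 hS2 (.step hc2 hS3)
                rw [e1, e2, Multiset.cons_swap]

theorem rmN_eq (hR : GoodRS O R) {t : Trm F V} {S} (h : RMn R t S) : rmN R t = S := by
  rw [rmN, dif_pos ⟨S, h⟩]
  exact RMn_unique hR t (⟨S, h⟩ : ∃ x, RMn R t x).choose_spec h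

/-- Rewrite sequences collecting redex multisets. -/
inductive RSeq (R : Set (Trm F V × Trm F V)) :
    Trm F V → Trm F V → Multiset (Multiset (Trm F V)) → Prop
  | refl (t : Trm F V) : RSeq R t t 0
  | step {t t' t'' u : Trm F V} {b : Bool} {S : Multiset (Multiset (Trm F V))} :
      RewAt R t t' u b → RSeq R t' t'' S → RSeq R t t'' (({u, u} : Multiset (Trm F V)) ::ₘ S)

theorem RSeq.toRTG {t t' : Trm F V} {S} (h : RSeq R t t' S) :
    Relation.ReflTransGen (Step R) t t' := by
  induction h with
  | refl t => exact .refl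
  | step hr _ ih => exact .head ⟨_, _, hr⟩ ih

theorem RSeq.trans {t t' t'' : Trm F V} {S S'} (h : RSeq R t t' S) (h' : RSeq R t' t'' S') :
    RSeq R t t'' (S + S') := by
  induction h with
  | refl t => simpa using h'
  | step hr _ ih => rw [Multiset.cons_add]; exact .step hr (ih h')

theorem RMn_of_RSeq {t t' : Trm F V} {S S'} (h : RSeq R t t' S) (h' : RMn R t' S') :
    RMn R t (S + S') := by
  induction h with
  | refl t => simpa using h'
  | step hr _ ih => rw [Multiset.cons_add]; exact .step hr (ih h')

theorem RMn_toRSeq {t : Trm F V} {S} (h : RMn R t S) :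
    ∃ t', RSeq R t t' S ∧ Irred R t' := by
  induction h with
  | irred hi => exact ⟨_, .refl _, hi⟩
  | step hr _ ih => exact ⟨ih.choose, .step hr ih.choose_spec.1, ih.choose_spec.2⟩

theorem RSeq_nf (hR : GoodRS O R) (t : Trm F V) : RSeq R t (nf R t) (rmN R t) := by
  obtain ⟨S, hS⟩ := RMn_exists hR t
  obtain ⟨t', ht', hirr⟩ := RMn_toRSeq hS
  rw [rmN_eq hR hS, nf_eq hR ⟨ht'.toRTG, hirr⟩]
  exact ht'

theorem RSeq.lift {a a' : Trm F V} {S} (f : F) (l r : List (Trm F V))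
    (h : RSeq R a a' S) :
    RSeq R (Trm.app f (l ++ a :: r)) (Trm.app f (l ++ a' :: r)) S := by
  induction h with
  | refl t => exact .refl _
  | step hr _ ih => exact .step (.congr hr) ih

theorem RSeq_args (hR : GoodRS O R) (f : F) :
    ∀ (gs l : List (Trm F V)),
      RSeq R (Trm.app f (l ++ gs)) (Trm.app f (l ++ gs.map (nf R)))
        ((gs.map (rmN R)).sum) := by
  intro gs
  induction gs with
  | nil => intro l; simpa using RSeq.refl _
  | cons g rest ih =>
      intro l
      have h1 : RSeq R (Trm.app f (l ++ g :: rest)) (Trm.app f (l ++ nf R g :: rest))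
          (rmN R g) := RSeq.lift f l rest (RSeq_nf hR g)
      have h2 := ih (l ++ [nf R g])
      have e1 : (l ++ [nf R g]) ++ rest = l ++ nf R g :: rest := by simp
      have e2 : (l ++ [nf R g]) ++ rest.map (nf R) = l ++ (g :: rest).map (nf R) := by simp
      rw [e1, e2] at h2
      have := h1.trans h2
      simpa using this

/-- Compositional computation of the redex multiset of an application. -/
theorem rmN_app (hR : GoodRS O R) (f : F) (gs : List (Trm F V)) :
    rmN R (Trm.app f gs) =
      (gs.map (rmN R)).sum + rmN R (Trm.app f (gs.map (nf R))) := by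
  have h1 := RSeq_args hR f gs []
  simp only [List.nil_append] at h1
  obtain ⟨S, hS⟩ := RMn_exists hR (Trm.app f (gs.map (nf R)))
  have h2 := RMn_of_RSeq h1 hS
  rw [rmN_eq hR h2, rmN_eq hR hS]

end Norm
section Sums
variable {F V : Type} {O : ReductionOrdering F V} {R : Set (Trm F V × Trm F V)}

theorem sum_image_le {α β M : Type} [DecidableEq α] [DecidableEq β]
    [AddCommMonoid M] [PartialOrder M] [IsOrderedAddMonoid M]
    [CanonicallyOrderedAdd M]
    (s : Finset α) (g : α → β) (f : β → M) :
    ((s.image g).sum f) ≤ s.sum (fun a => f (g a)) := by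
  induction s using Finset.induction_on with
  | empty => simp
  | insert _ _ hmem ih =>
      rename_i a s
      rw [Finset.image_insert, Finset.sum_insert hmem]
      by_cases h : g a ∈ s.image g
      · rw [Finset.insert_eq_self.2 h]
        exact le_add_of_nonneg_of_le (zero_le ..) ih
      · rw [Finset.sum_insert h]
        exact add_le_add_right ih _

theorem sum_union_le {α M : Type} [DecidableEq α] [AddCommMonoid M] [PartialOrder M] [IsOrderedAddMonoid M]
    [CanonicallyOrderedAdd M]
    (s t : Finset α) (f : α → M) :
    ((s ∪ t).sum f) ≤ s.sum f + t.sum f := by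
  calc (s ∪ t).sum f ≤ s.sum f + (t \ s).sum f := by
        rw [← Finset.sum_union (Finset.disjoint_sdiff)]
        exact Finset.sum_le_sum_of_subset (by
          intro a ha
          rcases Finset.mem_union.1 ha with h | h
          · exact Finset.mem_union.2 (Or.inl h)
          · by_cases h' : a ∈ s
            · exact Finset.mem_union.2 (Or.inl h')
            · exact Finset.mem_union.2 (Or.inr (Finset.mem_sdiff.2 ⟨h, h'⟩)))
    _ ≤ s.sum f + t.sum f :=
        add_le_add_right (Finset.sum_le_sum_of_subset (Finset.sdiff_subset)) _

theorem sum_insert_le' {α M : Type} [DecidableEq α] [AddCommMonoid M] [PartialOrder M] [IsOrderedAddMonoid M]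
    [CanonicallyOrderedAdd M]
    (a : α) (s : Finset α) (f : α → M) :
    ((insert a s).sum f) ≤ f a + s.sum f := by
  by_cases h : a ∈ s
  · rw [Finset.insert_eq_self.2 h]
    exact le_add_of_nonneg_of_le (zero_le ..) (le_refl _)
  · rw [Finset.sum_insert h]

theorem sum_foldr_union_le {α M : Type} [DecidableEq α] [AddCommMonoid M] [PartialOrder M] [IsOrderedAddMonoid M]
    [CanonicallyOrderedAdd M]
    (f : α → M) :
    ∀ L : List (Finset α), ((L.foldr (· ∪ ·) ∅).sum f) ≤ (L.map fun s => s.sum f).sum := by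
  intro L
  induction L with
  | nil => simp
  | cons s L ih =>
      simp only [List.foldr_cons, List.map_cons, List.sum_cons]
      exact le_trans (sum_union_le _ _ _) (add_le_add_right ih _)

/-- Lemma B: the compositional normalization multiset over all subterms is bounded
by the redex multiset of the whole instantiated term. -/
theorem sum_subterms_le (hR : GoodRS O R) (θ : V → Trm F V) :
    ∀ t : Trm F V, (t.subterms.sum (nmNElt R θ)) ≤ rmN R (t.subst θ)
  | .var x => by
      rw [Trm.subterms_var, Trm.subst_var, Finset.sum_singleton]
      exact le_of_eq rfl
  | .app f ts => by
      rw [Trm.subterms_app, Trm.subst_app]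
      have h1 := sum_insert_le' (M := Multiset (Multiset (Trm F V)))
        (Trm.app f ts) ((ts.map Trm.subterms).foldr (· ∪ ·) ∅) (nmNElt R θ)
      have h2 := sum_foldr_union_le (nmNElt R θ) (ts.map Trm.subterms)
      rw [List.map_map] at h2
      have h3 : ((ts.map fun t => t.subterms.sum (nmNElt R θ)).sum) ≤
          (ts.map fun t => rmN R (t.subst θ)).sum := by
        apply List.sum_le_sum
        intro t ht
        exact sum_subterms_le hR θ t
      rw [rmN_app hR f (ts.map (Trm.subst θ))]
      have e1 : nmNElt R θ (Trm.app f ts) =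
          rmN R (Trm.app f ((ts.map (Trm.subst θ)).map (nf R))) := by
        rw [nmNElt, List.map_map]
        rfl
      calc (insert (Trm.app f ts) ((ts.map Trm.subterms).foldr (· ∪ ·) ∅)).sum (nmNElt R θ)
          ≤ nmNElt R θ (Trm.app f ts) +
            ((ts.map Trm.subterms).foldr (· ∪ ·) ∅).sum (nmNElt R θ) := h1
        _ ≤ nmNElt R θ (Trm.app f ts) + (ts.map fun t => t.subterms.sum (nmNElt R θ)).sum :=
            add_le_add_right (le_trans h2 (le_refl _)) _
        _ ≤ nmNElt R θ (Trm.app f ts) + (ts.map fun t => rmN R (t.subst θ)).sum :=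
            add_le_add_right h3 _
        _ = ((ts.map (Trm.subst θ)).map (rmN R)).sum +
            rmN R (Trm.app f ((ts.map (Trm.subst θ)).map (nf R))) := by
            rw [e1, List.map_map, List.map_map, add_comm]
            rfl
termination_by t => sizeOf t
decreasing_by
  have := List.sizeOf_lt_of_mem ht
  simp only [Trm.app.sizeOf_spec]; omega

end Sums
section ClauseLemmas
variable {F V : Type} {O : ReductionOrdering F V} {R : Set (Trm F V × Trm F V)}
variable {σ θ : V → Trm F V}

theorem Trm.subst_comp (hcomp : ∀ x, (σ x).subst θ = θ x) (t : Trm F V) :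
    (t.subst σ).subst θ = t.subst θ := by
  rw [Trm.subst_subst]
  congr 1
  funext x
  exact hcomp x

theorem Lit.subst_comp (hcomp : ∀ x, (σ x).subst θ = θ x) (L : Lit F V) :
    Lit.subst θ (Lit.subst σ L) = Lit.subst θ L := by
  cases L <;> simp [Lit.subst, Trm.subst_comp hcomp]

theorem Clause.subst_comp (hcomp : ∀ x, (σ x).subst θ = θ x) (C : Clause F V) :
    Clause.subst θ (Clause.subst σ C) = Clause.subst θ C := by
  rw [Clause.subst, Clause.subst, Clause.subst, Multiset.map_map]
  exact Multiset.map_congr rfl (fun L _ => Lit.subst_comp hcomp L)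

theorem negTops_subst (L : Lit F V) :
    (Lit.subst σ L).negTops = L.negTops.image (Trm.subst σ) := by
  cases L with
  | pos u v => simp [Lit.subst, Lit.negTops]
  | neg u v =>
      simp only [Lit.subst, Lit.negTops, Finset.image_insert, Finset.image_singleton]

theorem tsN_subst (C : Clause F V) :
    tsN (Clause.subst σ C) = (tsN C).image (Trm.subst σ) := by
  unfold tsN Clause.subst
  ext v
  simp only [Finset.mem_sup, Multiset.mem_toFinset, Multiset.mem_map, Finset.mem_image]
  constructor
  · rintro ⟨L, ⟨L0, hL0, rfl⟩, hv⟩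
    rw [negTops_subst] at hv
    obtain ⟨w, hw, rfl⟩ := Finset.mem_image.1 hv
    exact ⟨w, ⟨L0, hL0, hw⟩, rfl⟩
  · rintro ⟨w, ⟨L0, hL0, hw⟩, rfl⟩
    exact ⟨L0.subst σ, ⟨L0, hL0, rfl⟩,
      by rw [negTops_subst]; exact Finset.mem_image_of_mem _ hw⟩

theorem mem_ssN {C : Clause F V} {v : Trm F V} :
    v ∈ ssN C ↔ ∃ L ∈ C, v ∈ L.negSubs := by
  unfold ssN
  simp [Finset.mem_sup, Multiset.mem_toFinset]

theorem ssN_subst_cases {C : Clause F V} {v : Trm F V}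
    (hv : v ∈ ssN (Clause.subst σ C)) :
    (∃ w ∈ ssN C, (¬ ∃ x, w = Trm.var x) ∧ v = w.subst σ) ∨
    (∃ x, Trm.var x ∈ ssN C ∧ v ∈ (σ x).subterms) := by
  obtain ⟨L, hL, hv⟩ := mem_ssN.1 hv
  obtain ⟨L0, hL0, rfl⟩ := Multiset.mem_map.1 hL
  cases L0 with
  | pos u w => simp [Lit.subst, Lit.negSubs] at hv
  | neg u w =>
      simp only [Lit.subst, Lit.negSubs, Finset.mem_union] at hv
      rcases hv with hv | hv
      all_goals
        rcases Trm.subterms_subst_cases hv with ⟨w', hw', hnv, rfl⟩ | ⟨x, hx, hvx⟩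
      · exact Or.inl ⟨w', mem_ssN.2 ⟨_, hL0, by simp [Lit.negSubs, hw']⟩, hnv, rfl⟩
      · exact Or.inr ⟨x, mem_ssN.2 ⟨_, hL0, by simp [Lit.negSubs, hx]⟩, hvx⟩
      · exact Or.inl ⟨w', mem_ssN.2 ⟨_, hL0, by simp [Lit.negSubs, hw']⟩, hnv, rfl⟩
      · exact Or.inr ⟨x, mem_ssN.2 ⟨_, hL0, by simp [Lit.negSubs, hx]⟩, hvx⟩

theorem sum_sup_le {α β M : Type} [DecidableEq α] [DecidableEq β]
    [AddCommMonoid M] [PartialOrder M] [IsOrderedAddMonoid M]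
    [CanonicallyOrderedAdd M]
    (s : Finset α) (g : α → Finset β) (f : β → M) :
    ((s.sup g).sum f) ≤ s.sum (fun a => (g a).sum f) := by
  induction s using Finset.induction_on with
  | empty => simp
  | insert _ _ hmem ih =>
      rename_i a s
      rw [Finset.sup_insert, Finset.sum_insert hmem]
      calc ((g a ⊔ s.sup g).sum f) ≤ (g a).sum f + (s.sup g).sum f :=
            sum_union_le _ _ _
        _ ≤ (g a).sum f + s.sum (fun a => (g a).sum f) := add_le_add_right ih _

theorem nmNElt_subst (hcomp : ∀ x, (σ x).subst θ = θ x) {w : Trm F V}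
    (hw : ¬ ∃ x, w = Trm.var x) :
    nmNElt R θ (w.subst σ) = nmNElt R θ w := by
  cases w with
  | var x => exact absurd ⟨x, rfl⟩ hw
  | app f ts =>
      rw [Trm.subst_app]
      show rmN R _ = rmN R _
      congr 1
      rw [List.map_map]
      exact congrArg _ (List.map_congr_left fun t _ =>
        congrArg (nf R) (Trm.subst_comp hcomp t))

theorem ssN_sum_le (hR : GoodRS O R) (hcomp : ∀ x, (σ x).subst θ = θ x) (C : Clause F V) :
    ((ssN (Clause.subst σ C)).sum (nmNElt R θ)) ≤ (ssN C).sum (nmNElt R θ) := by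
  classical
  set p : Trm F V → Prop := fun w => ∃ x, w = Trm.var x with hp
  set Vars := (ssN C).filter p with hVars
  set NonV := (ssN C).filter (fun w => ¬ p w) with hNonV
  have hsub : ssN (Clause.subst σ C) ⊆
      NonV.image (Trm.subst σ) ∪ Vars.sup (fun w => (w.subst σ).subterms) := by
    intro v hv
    rcases ssN_subst_cases hv with ⟨w, hw, hnv, rfl⟩ | ⟨x, hx, hvx⟩
    · exact Finset.mem_union.2 (Or.inl
        (Finset.mem_image_of_mem _ (Finset.mem_filter.2 ⟨hw, hnv⟩)))
    · refine Finset.mem_union.2 (Or.inr (Finset.mem_sup.2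
        ⟨Trm.var x, Finset.mem_filter.2 ⟨hx, ⟨x, rfl⟩⟩, ?_⟩))
      rw [Trm.subst_var]
      exact hvx
  calc (ssN (Clause.subst σ C)).sum (nmNElt R θ)
      ≤ (NonV.image (Trm.subst σ) ∪ Vars.sup (fun w => (w.subst σ).subterms)).sum
          (nmNElt R θ) := Finset.sum_le_sum_of_subset hsub
    _ ≤ (NonV.image (Trm.subst σ)).sum (nmNElt R θ) +
        (Vars.sup (fun w => (w.subst σ).subterms)).sum (nmNElt R θ) :=
          sum_union_le _ _ _
    _ ≤ NonV.sum (fun w => nmNElt R θ (w.subst σ)) +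
        Vars.sum (fun w => ((w.subst σ).subterms).sum (nmNElt R θ)) :=
          add_le_add (sum_image_le _ _ _) (sum_sup_le _ _ _)
    _ ≤ NonV.sum (nmNElt R θ) + Vars.sum (nmNElt R θ) := by
        apply add_le_add
        · apply le_of_eq
          apply Finset.sum_congr rfl
          intro w hw
          exact nmNElt_subst hcomp (Finset.mem_filter.1 hw).2
        · apply Finset.sum_le_sum
          intro w hw
          obtain ⟨x, rfl⟩ := (Finset.mem_filter.1 hw).2
          rw [Trm.subst_var]
          calc ((σ x).subterms).sum (nmNElt R θ) ≤ rmN R ((σ x).subst θ) :=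
                sum_subterms_le hR θ (σ x)
            _ = nmNElt R θ (Trm.var x) := by rw [hcomp x]; rfl
    _ = (ssN C).sum (nmNElt R θ) := by
        rw [hNonV, hVars, add_comm]
        exact Finset.sum_filter_add_sum_filter_not _ _ _

end ClauseLemmas
section Assemble
variable {F V : Type} {O : ReductionOrdering F V} {R : Set (Trm F V × Trm F V)}
variable {σ θ : V → Trm F V}

theorem tsN_sum_le (hcomp : ∀ x, (σ x).subst θ = θ x) (C : Clause F V) :
    ((tsN (Clause.subst σ C)).sum
        (fun t => ({({nf R (t.subst θ), nf R (t.subst θ)} : Multiset (Trm F V))} :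
          Multiset (Multiset (Trm F V))))) ≤
      (tsN C).sum
        (fun t => ({({nf R (t.subst θ), nf R (t.subst θ)} : Multiset (Trm F V))} :
          Multiset (Multiset (Trm F V)))) := by
  rw [tsN_subst]
  refine le_trans (sum_image_le _ _ _) (le_of_eq ?_)
  apply Finset.sum_congr rfl
  intro w _
  rw [Trm.subst_comp hcomp]

theorem posPart_subst (hcomp : ∀ x, (σ x).subst θ = θ x) (C : Clause F V) :
    (Multiset.map (fun L => match L with
       | Lit.pos s s' => (({({s.subst θ, s'.subst θ} : Multiset (Trm F V))}) :
           Multiset (Multiset (Trm F V)))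
       | Lit.neg _ _ => 0) (Clause.subst σ C)).sum =
    (Multiset.map (fun L => match L with
       | Lit.pos s s' => (({({s.subst θ, s'.subst θ} : Multiset (Trm F V))}) :
           Multiset (Multiset (Trm F V)))
       | Lit.neg _ _ => 0) C).sum := by
  rw [Clause.subst, Multiset.map_map]
  congr 1
  apply Multiset.map_congr rfl
  intro L _
  cases L with
  | pos u v => simp [Lit.subst, Trm.subst_comp hcomp]
  | neg u v => simp [Lit.subst]

theorem nmN_concl_le (hR : GoodRS O R) (hcomp : ∀ x, (σ x).subst θ = θ x)
    (C : Clause F V) :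
    nmN R (Clause.subst σ C) θ ≤ nmN R C θ := by
  unfold nmN
  exact add_le_add (add_le_add (ssN_sum_le hR hcomp C) (tsN_sum_le hcomp C))
    (le_of_eq (posPart_subst hcomp C))

theorem nmN_le_add (C : Clause F V) (s s' : Trm F V) :
    nmN R C θ ≤ nmN R (C + {Lit.neg s s'}) θ := by
  unfold nmN
  refine add_le_add (add_le_add ?_ ?_) (le_of_eq ?_)
  · apply Finset.sum_le_sum_of_subset
    intro v hv
    obtain ⟨L, hL, hv⟩ := mem_ssN.1 hv
    exact mem_ssN.2 ⟨L, Multiset.mem_add.2 (Or.inl hL), hv⟩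
  · apply Finset.sum_le_sum_of_subset
    intro v hv
    unfold tsN at hv ⊢
    obtain ⟨L, hL, hv⟩ := Finset.mem_sup.1 hv
    exact Finset.mem_sup.2 ⟨L, Multiset.mem_toFinset.2
      (Multiset.mem_add.2 (Or.inl (Multiset.mem_toFinset.1 hL))), hv⟩
  · rw [Multiset.map_add, Multiset.sum_add, Multiset.map_singleton, Multiset.sum_singleton]
    show _ = _ + (0 : Multiset (Multiset (Trm F V)))
    rw [add_zero]

end Assemble
/-- Lemma 13, non-Horn case: the conclusion `(C'σ·θ)` of a ground
Equality Resolution inference is smaller than its premise `(C' ∨ s ≉ s' · θ)` in the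
non-Horn `R`-normalization closure ordering, for every left-reduced ground rewrite
system `R` contained in `≻`. -/
theorem eqres_reduces_nonhorn {F V : Type} (O : ReductionOrdering F V) (T : TieBreak F V)
    (C' : Clause F V) (s s' : Trm F V) (σ θ : V → Trm F V)
    (hg : Closure.IsGround (C' + {Lit.neg s s'}, θ))
    (heq : s.subst θ = s'.subst θ)
    (hmgu : IsMGU σ s s')
    (hmax : MaxIn O (Lit.subst θ (Lit.neg s s')) (Clause.subst θ C')) :
    ∀ R : Set (Trm F V × Trm F V), GoodRS O R →
      cloGTN O T R (C' + {Lit.neg s s'}, θ) (Clause.subst σ C', θ) := by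
  intro R hR
  have hcomp : ∀ x, (σ x).subst θ = θ x := hmgu.2 θ heq
  have hle : nmN R (Clause.subst σ C') θ ≤ nmN R (C' + {Lit.neg s s'}) θ :=
    le_trans (nmN_concl_le hR hcomp C') (nmN_le_add C' s s')
  obtain ⟨X, hX⟩ := Multiset.le_iff_exists_add.1 hle
  by_cases hX0 : X = 0
  · -- the normalization multisets are equal: compare the ground instances
    have hnm : nmN R (C' + {Lit.neg s s'}) θ = nmN R (Clause.subst σ C') θ := by
      rw [hX, hX0, add_zero]
    refine Or.inr (Or.inl ⟨hnm, ?_⟩)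
    have hinst1 : Closure.inst ((C' + {Lit.neg s s'} : Clause F V), θ) =
        Clause.subst θ C' + {Lit.subst θ (Lit.neg s s')} := by
      show Clause.subst θ (C' + {Lit.neg s s'}) = _
      rw [Clause.subst, Clause.subst, Multiset.map_add, Multiset.map_singleton]
    have hinst2 : Closure.inst ((Clause.subst σ C' : Clause F V), θ) =
        Clause.subst θ C' := by
      show Clause.subst θ (Clause.subst σ C') = _
      exact Clause.subst_comp hcomp C'
    rw [hinst1, hinst2]
    exact ⟨{Lit.subst θ (Lit.neg s s')}, 0, Clause.subst θ C', rfl, by simp,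
      by simp, by simp⟩
  · -- the premise has a strictly larger normalization multiset
    exact Or.inl ⟨X, 0, nmN R (Clause.subst σ C') θ, hX, by simp, hX0, by simp⟩
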